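/- Let λ ∈ ℂ with λ ≠ 0. There exist twice continuously differentiable functions u : [-1,0] → ℂ and w : [0,1] → ℂ, not both identically zero, satisfying u''(ξ) = λ²·u(ξ) for all ξ ∈ [-1,0], w''(ξ) = λ·w(ξ) for all ξ ∈ [0,1], u'(-1) = 0, w(1) = 0, λ·u(0) = w(0) and u'(0) = w'(0), if and only if √λ·cosh(λ)·cosh(√λ) + sinh(λ)·sinh(√λ) = 0. -/

import Mathlib

open Complex Set

noncomputable def whModel (c d A B : ℂ) : ℝ → ℂ :=
  fun t => A * Complex.cosh (c * t + d) + B * Complex.sinh (c * t + d)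

lemma whAff_hasDerivAt (c d : ℂ) (t : ℝ) : HasDerivAt (fun s : ℝ => c * s + d) c t := by
  have h := (Complex.ofRealCLM.hasDerivAt (x := t)).const_mul c
  simpa using h.add_const d

lemma whModel_hasDerivAt (c d A B : ℂ) (t : ℝ) :
    HasDerivAt (whModel c d A B) (whModel c d (c * B) (c * A) t) t := by
  have hc : HasDerivAt (fun s : ℝ => Complex.cosh (c * s + d))
      ((c : ℂ) • Complex.sinh (c * t + d)) t := by
    exact
      HasDerivAt.scomp t (Complex.hasDerivAt_cosh (c * t + d)) (whAff_hasDerivAt c d t)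
  have hs : HasDerivAt (fun s : ℝ => Complex.sinh (c * s + d))
      ((c : ℂ) • Complex.cosh (c * t + d)) t := by
    exact
      HasDerivAt.scomp t (Complex.hasDerivAt_sinh (c * t + d)) (whAff_hasDerivAt c d t)
  have := (hc.const_mul A).add (hs.const_mul B)
  simp only [smul_eq_mul] at this
  exact this.congr_deriv (by unfold whModel; ring)

lemma whModel_deriv (c d A B : ℂ) :
    deriv (whModel c d A B) = whModel c d (c * B) (c * A) :=
  funext fun t => (whModel_hasDerivAt c d A B t).deriv

lemma whModel_deriv2 (c d A B : ℂ) (t : ℝ) :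
    deriv (deriv (whModel c d A B)) t = c ^ 2 * whModel c d A B t := by
  rw [whModel_deriv, whModel_deriv]
  unfold whModel; ring

lemma whModel_contDiff (c d A B : ℂ) : ContDiff ℝ 2 (whModel c d A B) := by
  have haff : ContDiff ℝ 2 (fun s : ℝ => c * s + d) :=
    (contDiff_const.mul Complex.ofRealCLM.contDiff).add contDiff_const
  exact ((Complex.contDiff_cosh.restrict_scalars ℝ).comp haff).const_smul A |>.add
    (((Complex.contDiff_sinh.restrict_scalars ℝ).comp haff).const_smul B)

lemma whLip (c : ℂ) : LipschitzWith (1 + ‖c‖₊) (fun p : ℂ × ℂ => (p.2, c * p.1)) := by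
  apply LipschitzWith.of_dist_le_mul
  intro p q
  simp only [dist_eq_norm, Prod.norm_def, Prod.fst_sub, Prod.snd_sub, ← mul_sub, norm_mul]
  push_cast
  have hM : (0:ℝ) ≤ ‖p.1 - q.1‖ ⊔ ‖p.2 - q.2‖ := le_trans (norm_nonneg _) le_sup_left
  have h1 : (1:ℝ) ≤ 1 + ‖c‖ := by linarith [norm_nonneg c]
  rw [sup_le_iff]
  refine ⟨le_sup_right.trans (le_mul_of_one_le_left hM h1), ?_⟩
  have := mul_le_mul_of_nonneg_left
    (le_sup_left : ‖p.1 - q.1‖ ≤ ‖p.1 - q.1‖ ⊔ ‖p.2 - q.2‖) (norm_nonneg c)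
  nlinarith

lemma whODEunique (k : ℂ) {f g : ℝ → ℂ} {a b : ℝ}
    (hf : ContDiff ℝ 2 f) (hg : ContDiff ℝ 2 g)
    (hodef : ∀ t ∈ Set.Icc a b, deriv (deriv f) t = k * f t)
    (hodeg : ∀ t, deriv (deriv g) t = k * g t)
    (h0 : f a = g a) (h1 : deriv f a = deriv g a) :
    ∀ t ∈ Set.Icc a b, f t = g t ∧ deriv f t = deriv g t := by
  have hfd : Differentiable ℝ f := hf.differentiable (by norm_num)
  have hgd : Differentiable ℝ g := hg.differentiable (by norm_num)
  have hf2 : ContDiff ℝ (1 + 1 : WithTop ℕ∞) f := by rw [one_add_one_eq_two]; exact hf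
  have hg2 : ContDiff ℝ (1 + 1 : WithTop ℕ∞) g := by rw [one_add_one_eq_two]; exact hg
  have hfd' : Differentiable ℝ (deriv f) :=
    (contDiff_succ_iff_deriv.mp hf2).2.2.differentiable one_ne_zero
  have hgd' : Differentiable ℝ (deriv g) :=
    (contDiff_succ_iff_deriv.mp hg2).2.2.differentiable one_ne_zero
  set v : ℝ → ℂ × ℂ → ℂ × ℂ := fun _ p => (p.2, k * p.1) with hv
  set F : ℝ → ℂ × ℂ := fun t => (f t, deriv f t) with hF
  set G : ℝ → ℂ × ℂ := fun t => (g t, deriv g t) with hG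
  have key : Set.EqOn F G (Set.Icc a b) := by
    apply ODE_solution_unique (K := 1 + ‖k‖₊) (fun _ => whLip k)
    · exact ((hfd.continuous.prodMk hfd'.continuous)).continuousOn
    · intro t ht
      have : HasDerivAt F (v t (F t)) t :=
        (HasDerivAt.prodMk (hfd t).hasDerivAt ((hodef t (Set.mem_Icc_of_Ico ht)) ▸ (hfd' t).hasDerivAt))
      exact this.hasDerivWithinAt
    · exact ((hgd.continuous.prodMk hgd'.continuous)).continuousOn
    · intro t ht
      have : HasDerivAt G (v t (G t)) t :=
        (HasDerivAt.prodMk (hgd t).hasDerivAt ((hodeg t) ▸ (hgd' t).hasDerivAt))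
      exact this.hasDerivWithinAt
    · simp only [hF, hG, h0, h1]
  intro t ht
  have := key ht
  exact ⟨congrArg Prod.fst this, congrArg Prod.snd this⟩

lemma whArith {l m : ℂ} (hm2 : m * m = l)
    (hc : Complex.cosh m = 0) (hs : Complex.sinh l = 0) : False := by
  rw [← Complex.cos_mul_I] at hc
  obtain ⟨kk, hk⟩ := Complex.cos_eq_zero_iff.mp hc
  have hml : l = (((-(((2 * (kk:ℝ) + 1) * Real.pi / 2) ^ 2)) : ℝ) : ℂ) := by
    have h2 : (m * I) * (m * I) = -l := by
      rw [mul_mul_mul_comm, hm2, Complex.I_mul_I]; ring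
    rw [hk] at h2
    push_cast at h2 ⊢
    linear_combination h2
  rw [hml, ← Complex.ofReal_sinh] at hs
  have hr : Real.sinh (-(((2 * (kk:ℝ) + 1) * Real.pi / 2) ^ 2)) = 0 := by exact_mod_cast hs
  rw [Real.sinh_eq_zero] at hr
  have hpi := Real.pi_pos
  have hkne : (2 * (kk:ℝ) + 1) ≠ 0 := by
    intro h
    have h' : ((2 * kk + 1 : ℤ) : ℝ) = 0 := by push_cast; linarith
    have : (2 * kk + 1 : ℤ) = 0 := by exact_mod_cast h'
    omega
  have : ((2 * (kk:ℝ) + 1) * Real.pi / 2) ^ 2 ≠ 0 := by positivity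
  exact this (by linarith)

/-- For `λ ∈ ℂ`, `λ ≠ 0`: there exist twice continuously differentiable `u : [-1,0] → ℂ`
and `w : [0,1] → ℂ`, not both identically zero, with `u'' = λ²u` on `[-1,0]`, `w'' = λw`
on `[0,1]`, `u'(-1) = 0`, `w(1) = 0`, `λu(0) = w(0)` and `u'(0) = w'(0)`, if and only if
`√λ·cosh(λ)·cosh(√λ) + sinh(λ)·sinh(√λ) = 0`, where `√λ = λ ^ (1/2 : ℂ)` is the principal
branch of the complex square root. -/
theorem wave_heat_neumann_eigenvalue_characterization (l : ℂ) (hl : l ≠ 0) :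
    (∃ u w : ℝ → ℂ, ContDiff ℝ 2 u ∧ ContDiff ℝ 2 w ∧
        (∀ ξ ∈ Set.Icc (-1:ℝ) 0, deriv (deriv u) ξ = l ^ 2 * u ξ) ∧
        (∀ ξ ∈ Set.Icc (0:ℝ) 1, deriv (deriv w) ξ = l * w ξ) ∧
        deriv u (-1) = 0 ∧ w 1 = 0 ∧ l * u 0 = w 0 ∧ deriv u 0 = deriv w 0 ∧
        ¬ ((∀ ξ ∈ Set.Icc (-1:ℝ) 0, u ξ = 0) ∧ (∀ ξ ∈ Set.Icc (0:ℝ) 1, w ξ = 0))) ↔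
      l ^ (1/2 : ℂ) * Complex.cosh l * Complex.cosh (l ^ (1/2 : ℂ)) +
        Complex.sinh l * Complex.sinh (l ^ (1/2 : ℂ)) = 0 := by
  set m : ℂ := l ^ (1/2 : ℂ) with hm_def
  have hm : m ≠ 0 := by
    rw [hm_def]
    simp [Complex.cpow_eq_zero_iff, hl]
  have hm2 : m * m = l := by
    rw [hm_def, ← Complex.cpow_add _ _ hl]
    norm_num
  constructor
  · rintro ⟨u, w, hu, hw, hodeu, hodew, hu1, hw1, hlu, hdd, hnz⟩
    by_contra hD
    set A : ℂ := u (-1) with hA_def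
    -- compare u with its model on [-1,0]
    have e0 : l * ((-1:ℝ):ℂ) + l = 0 := by push_cast; ring
    have key1 := whODEunique (l ^ 2) hu (whModel_contDiff l l A 0) hodeu
      (fun t => whModel_deriv2 l l A 0 t)
      (by simp [whModel, e0, hA_def])
      (by rw [whModel_deriv, hu1]; simp [whModel, e0])
    have hu0 : u 0 = A * Complex.cosh l := by
      have := (key1 0 (by norm_num)).1
      simpa [whModel] using this
    have hdu0 : deriv u 0 = l * A * Complex.sinh l := by
      have := (key1 0 (by norm_num)).2
      rw [whModel_deriv] at this
      simpa [whModel] using this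
    -- compare w with its model on [0,1]
    set W0 : ℂ := w 0 with hW0_def
    set W1 : ℂ := deriv w 0 with hW1_def
    have key2 := whODEunique l hw (whModel_contDiff m 0 W0 (W1 / m)) hodew
      (fun t => by rw [whModel_deriv2, show m ^ 2 = l by rw [pow_two, hm2]])
      (by simp [whModel, hW0_def])
      (by rw [whModel_deriv]; field_simp [whModel]; simp [whModel, hW1_def])
    have hw1' : W0 * Complex.cosh m + (W1 / m) * Complex.sinh m = 0 := by
      have := (key2 1 (by norm_num)).1
      rw [hw1] at this
      simpa [whModel] using this.symm
    have hW0 : W0 = l * A * Complex.cosh l := by rw [← hlu, hu0]; ring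
    have hW1 : W1 = l * A * Complex.sinh l := by rw [← hdd, hdu0]
    have hAzero : A = 0 := by
      rw [hW0, hW1] at hw1'
      have hfact : l * A * (m * Complex.cosh l * Complex.cosh m +
          Complex.sinh l * Complex.sinh m) = 0 := by
        field_simp at hw1'
        linear_combination hw1'
      rcases mul_eq_zero.mp hfact with h | h
      · rcases mul_eq_zero.mp h with h' | h'
        · exact absurd h' hl
        · exact h'
      · exact absurd h hD
    apply hnz
    constructor
    · intro ξ hξ
      have := (key1 ξ hξ).1
      simpa [whModel, hAzero] using this
    · intro ξ hξ
      have := (key2 ξ hξ).1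
      rw [this]
      simp [whModel, hW0, hW1, hAzero]
  · intro hD
    set A : ℂ := m * Complex.cosh m with hA_def
    set B : ℂ := l * Complex.sinh l with hB_def
    have e0 : l * ((-1:ℝ):ℂ) + l = 0 := by push_cast; ring
    refine ⟨whModel l l A 0, whModel m (-m) 0 B,
      whModel_contDiff _ _ _ _, whModel_contDiff _ _ _ _,
      fun ξ _ => whModel_deriv2 l l A 0 ξ,
      fun ξ _ => by rw [whModel_deriv2, show m ^ 2 = l by rw [pow_two, hm2]],
      ?_, ?_, ?_, ?_, ?_⟩
    · rw [whModel_deriv]; simp [whModel, e0]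
    · simp [whModel]
    · simp only [whModel]
      push_cast
      simp only [mul_zero, zero_add, zero_mul, Complex.sinh_neg]
      linear_combination l * hD
    · rw [whModel_deriv, whModel_deriv]
      simp only [whModel]
      push_cast
      simp only [mul_zero, zero_add, zero_mul, add_zero, Complex.cosh_neg, Complex.sinh_neg]
      ring
    · rintro ⟨h1', _⟩
      have hval := h1' (-1) (by norm_num)
      have hA0 : A = 0 := by simpa [whModel, e0] using hval
      have hcosh : Complex.cosh m = 0 := by
        rcases mul_eq_zero.mp (hA_def ▸ hA0) with h | h
        · exact absurd h hm
        · exact h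
      have hss : Complex.sinh l * Complex.sinh m = 0 := by
        have := hD
        rw [hcosh] at this
        linear_combination this
      rcases mul_eq_zero.mp hss with h | h
      · exact whArith hm2 hcosh h
      · have := Complex.cosh_sq_sub_sinh_sq m
        rw [hcosh, h] at this
        norm_num at this
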